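/- For a partition λ and index k < n/2, the reflection injection from north-east paths avoiding λ^k (ending at (k, n-k)) maps into north-east paths avoiding λ^{k+1} (ending at (k+1, n-k-1)): if a path contains no point of the Ferrers diagram of λ^k, its reflected image contains no point of the Ferrers diagram of λ^{k+1} = (λ_{k+1}, ..., λ_m). -/

import Mathlib

/-- A north-east lattice path, recorded by its list of steps. -/
def IsNEPath (p : List (ℤ × ℤ)) : Prop :=
  ∀ s ∈ p, s = (1, 0) ∨ s = (0, 1)

/-- `Avoids p j μ` : every lattice point `(x,y)` on the path `p` ending at height `j`
satisfies `x ≥ μ (j - y)`, i.e. `p` avoids the Ferrers diagram of the partition `μ`. -/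
def Avoids (p : List (ℤ × ℤ)) (j : ℕ) (μ : ℕ → ℕ) : Prop :=
  ∀ m : ℕ, ((μ (j - ((p.take m).sum.2).toNat) : ℤ)) ≤ (p.take m).sum.1

/-- Reflect, in the line `y = x + c`, the portion of the path `p` after its last
intersection with that line. -/
def reflectAfter (c : ℤ) (p : List (ℤ × ℤ)) : List (ℤ × ℤ) :=
  let t := Nat.findGreatest (fun m => (p.take m).sum.2 = (p.take m).sum.1 + c) p.length
  p.take t ++ (p.drop t).map (fun s => (s.2, s.1))

lemma sum_map_swap (l : List (ℤ × ℤ)) :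
    (l.map (fun s => (s.2, s.1))).sum = (l.sum.2, l.sum.1) := by
  induction l with
  | nil => simp; rfl
  | cons a l ih => simp [ih, Prod.ext_iff]

lemma ivt_aux (f : ℕ → ℤ) (c : ℤ) (N : ℕ)
    (hstep : ∀ i, i < N → f (i + 1) = f i + 1 ∨ f (i + 1) = f i - 1)
    (hN : f N = c + 1) :
    ∀ d m, N - m ≤ d → m ≤ N → f m ≤ c → ∃ j, m ≤ j ∧ j ≤ N ∧ f j = c := by
  intro d
  induction d with
  | zero =>
    intro m h1 h2 h3
    have : m = N := by omega
    subst this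
    omega
  | succ d ih =>
    intro m h1 h2 h3
    by_cases hc : f m = c
    · exact ⟨m, le_refl _, h2, hc⟩
    · have hmN : m < N := by
        rcases lt_or_eq_of_le h2 with h | h
        · exact h
        · subst h; omega
      have h4 : f (m + 1) ≤ c := by
        rcases hstep m hmN with h | h <;> omega
      obtain ⟨j, hj1, hj2, hj3⟩ := ih (m + 1) (by omega) (by omega) h4
      exact ⟨j, by omega, hj2, hj3⟩

lemma nepath_sum_nonneg (p : List (ℤ × ℤ)) (hp : IsNEPath p) :
    0 ≤ p.sum.1 ∧ 0 ≤ p.sum.2 := by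
  induction p with
  | nil => simp
  | cons a l ih =>
    have ha := hp a (by simp)
    have hl := ih (fun s hs => hp s (by simp [hs]))
    rcases ha with h | h <;> subst h <;> simp <;> omega

/-- For a partition `λ` and `k < n/2`, the reflection injection maps north-east
paths to `(k, n-k)` avoiding `λ^k = (λ_k, ..., λ_m)` into north-east paths to
`(k+1, n-k-1)` avoiding `λ^{k+1} = (λ_{k+1}, ..., λ_m)`. -/
theorem reflection_preserves_avoidance (lam : ℕ → ℕ)
    (hlam : ∀ a b : ℕ, a ≤ b → lam b ≤ lam a) (n k : ℕ) (h : 2 * k < n)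
    (p : List (ℤ × ℤ)) (hp : IsNEPath p) (hend : p.sum = ((k : ℤ), (n : ℤ) - k))
    (havoid : Avoids p (n - k) (fun t => lam (k + t))) :
    Avoids (reflectAfter ((n : ℤ) - 2 * k - 1) p) (n - (k + 1)) (fun t => lam (k + 1 + t)) := by
  set c : ℤ := (n : ℤ) - 2 * k - 1 with hc
  have hc0 : 0 ≤ c := by omega
  -- basic facts about partial sums
  have htake_ne : ∀ m : ℕ, IsNEPath (p.take m) :=
    fun m s hs => hp s (List.mem_of_mem_take hs)
  have hdrop_ne : ∀ m : ℕ, IsNEPath (p.drop m) :=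
    fun m s hs => hp s (List.mem_of_mem_drop hs)
  have hnn : ∀ m : ℕ, 0 ≤ (p.take m).sum.1 ∧ 0 ≤ (p.take m).sum.2 :=
    fun m => nepath_sum_nonneg _ (htake_ne m)
  have hsplit : ∀ m : ℕ, p.sum = (p.take m).sum + (p.drop m).sum := by
    intro m
    conv_lhs => rw [← List.take_append_drop m p]
    rw [List.sum_append]
  have hub : ∀ m : ℕ, (p.take m).sum.1 ≤ (k : ℤ) ∧ (p.take m).sum.2 ≤ (n : ℤ) - k := by
    intro m
    have h1 := hsplit m
    have h2 := nepath_sum_nonneg _ (hdrop_ne m)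
    rw [hend, Prod.ext_iff] at h1
    obtain ⟨h1x, h1y⟩ := h1
    simp only [Prod.fst_add, Prod.snd_add] at h1x h1y
    constructor <;> omega
  -- the diagonal coordinate
  set f : ℕ → ℤ := fun m => (p.take m).sum.2 - (p.take m).sum.1 with hf
  have hfstep : ∀ i, i < p.length → f (i + 1) = f i + 1 ∨ f (i + 1) = f i - 1 := by
    intro i hi
    have hs := List.sum_take_succ p i hi
    have hmem : p[i] ∈ p := List.getElem_mem hi
    rcases hp _ hmem with hstep | hstep
    · right
      simp only [hf, hs, hstep, Prod.snd_add, Prod.fst_add]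
      norm_num
      ring
    · left
      simp only [hf, hs, hstep, Prod.snd_add, Prod.fst_add]
      norm_num
      ring
  have hfN : f p.length = c + 1 := by
    simp only [hf, List.take_length, hend]
    omega
  have hf0 : f 0 ≤ c := by simp [hf]; omega
  -- existence of an intersection with the diagonal
  obtain ⟨j, hj0, hjN, hjc⟩ := ivt_aux f c p.length hfstep hfN p.length 0 (by omega) (by omega) hf0
  set t := Nat.findGreatest (fun m => (p.take m).sum.2 = (p.take m).sum.1 + c) p.length with htdef
  have ht_le : t ≤ p.length := Nat.findGreatest_le _
  have ht_eq : (p.take t).sum.2 = (p.take t).sum.1 + c := by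
    have := Nat.findGreatest_spec (P := fun m => (p.take m).sum.2 = (p.take m).sum.1 + c)
      hjN (by simp only [hf] at hjc; omega)
    exact this
  have hgt : ∀ m, t < m → m ≤ p.length → ¬ ((p.take m).sum.2 = (p.take m).sum.1 + c) := by
    intro m h1 h2
    exact Nat.findGreatest_is_greatest h1 h2
  -- after time t, the path stays strictly above the diagonal
  have hdiff : ∀ m, t < m → (p.take m).sum.1 + c + 1 ≤ (p.take m).sum.2 := by
    intro m hm
    rcases le_or_gt m p.length with hmL | hmL
    · by_contra hcon
      push_neg at hcon
      have hfm : f m ≤ c := by simp only [hf]; omega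
      obtain ⟨i, hi1, hi2, hi3⟩ := ivt_aux f c p.length hfstep hfN p.length m (by omega) hmL hfm
      refine hgt i (by omega) hi2 ?_
      simp only [hf] at hi3
      omega
    · rw [List.take_of_length_le (le_of_lt hmL), hend]
      omega
  -- computation of the partial sums of the reflected path
  have hq1 : ∀ m : ℕ, m ≤ t →
      ((p.take t ++ (p.drop t).map (fun s => (s.2, s.1))).take m) = p.take m := by
    intro m hm
    rw [List.take_append_of_le_length (by simp; omega)]
    rw [List.take_take, min_eq_left hm]
  have hq2 : ∀ m : ℕ, t ≤ m →
      ((p.take t ++ (p.drop t).map (fun s => (s.2, s.1))).take m).sum =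
        (p.take t).sum + (((p.take m).sum - (p.take t).sum).2,
          ((p.take m).sum - (p.take t).sum).1) := by
    intro m hm
    have hdt : (p.drop t).take (m - t) = (p.take m).drop t := by
      rw [List.drop_take]
    have hsum : ((p.take m).drop t).sum = (p.take m).sum - (p.take t).sum := by
      have : p.take m = (p.take m).take t ++ (p.take m).drop t := (List.take_append_drop t _).symm
      have h2 : (p.take m).take t = p.take t := by
        rw [List.take_take, min_eq_left hm]
      conv_rhs => rw [this]
      rw [List.sum_append, h2]
      abel
    rw [List.take_append, List.take_of_length_le (by simp; omega),
      ← List.map_take]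
    simp only [List.length_take, min_eq_left ht_le]
    rw [List.sum_append, sum_map_swap, hdt, hsum]
  -- main argument
  intro m
  simp only [reflectAfter, ← htdef, ← hc]
  rcases le_or_gt m t with hm | hm
  · rw [hq1 m hm]
    have hA := havoid m
    simp only at hA
    have hY := (hub m).2
    have hY0 := (hnn m).2
    have harg : k + ((n - k) - ((p.take m).sum.2).toNat) ≤
        k + 1 + ((n - (k + 1)) - ((p.take m).sum.2).toNat) := by omega
    calc ((lam (k + 1 + ((n - (k + 1)) - ((p.take m).sum.2).toNat)) : ℤ))
        ≤ (lam (k + ((n - k) - ((p.take m).sum.2).toNat)) : ℤ) := by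
          exact_mod_cast hlam _ _ harg
      _ ≤ (p.take m).sum.1 := hA
  · rw [hq2 m (le_of_lt hm)]
    have hA := havoid m
    simp only at hA
    have hX0 := (hnn m).1
    have hXk := (hub m).1
    have hY := (hub m).2
    have hY0 := (hnn m).2
    have hd := hdiff m hm
    simp only [Prod.snd_add, Prod.fst_add, Prod.fst_sub, Prod.snd_sub, ht_eq]
    have harg : k + ((n - k) - ((p.take m).sum.2).toNat) ≤
        k + 1 + ((n - (k + 1)) -
          ((p.take t).sum.1 + c + ((p.take m).sum.1 - (p.take t).sum.1)).toNat) := by omega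
    calc ((lam (k + 1 + ((n - (k + 1)) -
          ((p.take t).sum.1 + c + ((p.take m).sum.1 - (p.take t).sum.1)).toNat)) : ℤ))
        ≤ (lam (k + ((n - k) - ((p.take m).sum.2).toNat)) : ℤ) := by
          exact_mod_cast hlam _ _ harg
      _ ≤ (p.take m).sum.1 := hA
      _ ≤ (p.take t).sum.1 + ((p.take m).sum.2 - ((p.take t).sum.1 + c)) := by omega
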